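/- Let Γ be a group acting by isometries on a complete CAT(0) space X, and suppose γ ∈ Γ acts as a hyperbolic isometry: there exists x₀ ∈ X with d(γ·x₀, x₀) = |γ| and |γ| > 0, where |γ| := inf{ d(γ·y, y) : y ∈ X }. Then the image of γ in the abelianization of its centralizer Z_Γ(γ) = {g ∈ Γ : gγ = γg} has infinite order; in particular γ has infinite order in the abelianization of Z_Γ(γ). -/

import Mathlib

/-- `m` is a midpoint of `x` and `y`: it lies at distance `dist x y / 2` from both. -/
def IsMidpoint {X : Type*} [MetricSpace X] (x y m : X) : Prop :=
  dist x m = dist x y / 2 ∧ dist y m = dist x y / 2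

/-- A CAT(0) space, via the Bruhat–Tits (CN inequality) characterization: every pair of
points has a midpoint satisfying the CN inequality. -/
class CAT0Space (X : Type*) [MetricSpace X] : Prop where
  cn : ∀ x y : X, ∃ m : X, IsMidpoint x y m ∧
    ∀ z : X, dist z m ^ 2 ≤ dist z x ^ 2 / 2 + dist z y ^ 2 / 2 - dist x y ^ 2 / 4

section Aux

variable {X : Type*} [MetricSpace X] [CAT0Space X]

lemma isMidpoint_cn {x y m : X} (h : IsMidpoint x y m) (z : X) :
    dist z m ^ 2 ≤ dist z x ^ 2 / 2 + dist z y ^ 2 / 2 - dist x y ^ 2 / 4 := by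
  obtain ⟨m', hm', hcn⟩ := CAT0Space.cn x y
  have h1 := hcn m
  have hx : dist m x = dist x y / 2 := by rw [dist_comm]; exact h.1
  have hy : dist m y = dist x y / 2 := by rw [dist_comm]; exact h.2
  rw [hx, hy] at h1
  have hnn := dist_nonneg (x := m) (y := m')
  have h0 : dist m m' = 0 := le_antisymm (by nlinarith) hnn
  have hmm : m = m' := by rwa [dist_eq_zero] at h0
  rw [hmm]; exact hcn z

lemma chain_dist {ℓ : ℝ} (hl : 0 ≤ ℓ) (e : ℕ → X)
    (h2 : ∀ n, dist (e n) (e (n + 2)) = ℓ)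
    (hmid : ∀ n, IsMidpoint (e n) (e (n + 2)) (e (n + 1))) :
    ∀ n, dist (e 0) (e n) = n * ℓ / 2 := by
  have h1 : ∀ n, dist (e n) (e (n + 1)) = ℓ / 2 := by
    intro n
    have := (hmid n).1
    rw [h2 n] at this
    exact this
  have key : ∀ n, dist (e 0) (e n) = n * ℓ / 2 ∧
      dist (e 0) (e (n + 1)) = (n + 1) * ℓ / 2 := by
    intro n
    induction n with
    | zero => exact ⟨by simp, by simpa using h1 0⟩
    | succ k ih =>
      obtain ⟨ihk, ihk1⟩ := ih
      have hcn := isMidpoint_cn (hmid k) (e 0)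
      rw [h2 k, ihk, ihk1] at hcn
      have htri : dist (e 0) (e (k + 2)) ≤ ((k : ℝ) + 2) * ℓ / 2 := by
        calc dist (e 0) (e (k + 2))
            ≤ dist (e 0) (e (k + 1)) + dist (e (k + 1)) (e (k + 2)) := dist_triangle _ _ _
          _ = ((k : ℝ) + 1) * ℓ / 2 + ℓ / 2 := by rw [ihk1, h1]
          _ = ((k : ℝ) + 2) * ℓ / 2 := by ring
      have hd := dist_nonneg (x := e 0) (y := e (k + 2))
      have hge : ((k : ℝ) + 2) * ℓ / 2 ≤ dist (e 0) (e (k + 2)) := by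
        nlinarith [hcn, hd, hl, mul_nonneg (by positivity : (0:ℝ) ≤ ((k:ℝ)+2)) hl]
      constructor
      · push_cast; linarith [ihk1]
      · push_cast; linarith [htri, hge]
  exact fun n => (key n).1

variable {Γ : Type*} [Group Γ] [MulAction Γ X]

lemma factA (hdist : ∀ (g : Γ) (a b : X), dist (g • a) (g • b) = dist a b)
    {γ : Γ} {ℓ : ℝ} (hl : 0 ≤ ℓ) (hlb : ∀ u : X, ℓ ≤ dist (γ • u) u)
    {w : X} (hw : dist (γ • w) w = ℓ) (n : ℕ) :
    dist (γ ^ n • w) w = n * ℓ := by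
  obtain ⟨m, hm, -⟩ := CAT0Space.cn w (γ • w)
  have hwgw : dist w (γ • w) = ℓ := by rw [dist_comm]; exact hw
  have hwm : dist w m = ℓ / 2 := by rw [hm.1, hwgw]
  have hgwm : dist (γ • w) m = ℓ / 2 := by rw [hm.2, hwgw]
  have hmm : dist m (γ • m) = ℓ := by
    refine le_antisymm ?_ (by rw [dist_comm]; exact hlb m)
    calc dist m (γ • m) ≤ dist m (γ • w) + dist (γ • w) (γ • m) := dist_triangle _ _ _
      _ = ℓ / 2 + dist w m := by rw [dist_comm m (γ • w), hgwm, hdist]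
      _ = ℓ := by rw [hwm]; ring
  -- the chain
  set e : ℕ → X := fun k => if k % 2 = 0 then γ ^ (k / 2) • w else γ ^ (k / 2) • m with he
  have hsucc : ∀ (j : ℕ) (a : X), γ ^ (j + 1) • a = γ ^ j • (γ • a) := by
    intro j a; rw [pow_succ, mul_smul]
  have heven : ∀ j, e (2 * j) = γ ^ j • w := by
    intro j
    have h1 : (2 * j) % 2 = 0 := by omega
    have h2 : (2 * j) / 2 = j := by omega
    simp [he, h1, h2]
  have hodd : ∀ j, e (2 * j + 1) = γ ^ j • m := by
    intro j
    have h1 : (2 * j + 1) % 2 = 1 := by omega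
    have h2 : (2 * j + 1) / 2 = j := by omega
    simp [he, h1, h2]
  have h2d : ∀ k, dist (e k) (e (k + 2)) = ℓ := by
    intro k
    rcases Nat.even_or_odd k with ⟨j, hj⟩ | ⟨j, hj⟩
    · have hk : k = 2 * j := by omega
      subst hk
      have : 2 * j + 2 = 2 * (j + 1) := by ring
      rw [this, heven, heven, hsucc, hdist, hwgw]
    · have hk : k = 2 * j + 1 := by omega
      subst hk
      have : 2 * j + 1 + 2 = 2 * (j + 1) + 1 := by ring
      rw [this, hodd, hodd, hsucc, hdist, hmm]
  have hmidd : ∀ k, IsMidpoint (e k) (e (k + 2)) (e (k + 1)) := by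
    intro k
    rcases Nat.even_or_odd k with ⟨j, hj⟩ | ⟨j, hj⟩
    · have hk : k = 2 * j := by omega
      subst hk
      have e1 : 2 * j + 2 = 2 * (j + 1) := by ring
      constructor
      · rw [h2d, hodd, heven, hdist, hwm]
      · rw [h2d, e1, heven, hodd, hsucc, hdist, hgwm]
    · have hk : k = 2 * j + 1 := by omega
      subst hk
      have e1 : 2 * j + 1 + 1 = 2 * (j + 1) := by ring
      have e2 : 2 * j + 1 + 2 = 2 * (j + 1) + 1 := by ring
      constructor
      · rw [h2d, e1, hodd, heven, hsucc, hdist, dist_comm, hgwm]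
      · rw [h2d, e2, e1, hodd, heven, hdist, dist_comm, hwm]
  have := chain_dist hl e h2d hmidd (2 * n)
  rw [heven] at this
  have he0 : e 0 = w := by
    have := heven 0
    simpa using this
  rw [he0] at this
  rw [dist_comm, this]
  push_cast; ring

end Aux

section Bus

variable {X : Type*} [MetricSpace X] [CAT0Space X]

lemma myInf_shift {f : ℕ → ℝ} (hb : BddBelow (Set.range f)) (ha : ∀ n, f (n + 1) ≤ f n)
    (k : ℕ) : ⨅ n, f (n + k) = ⨅ n, f n := by
  have hA : Antitone f := antitone_nat_of_succ_le ha
  have hb' : BddBelow (Set.range fun n => f (n + k)) := by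
    obtain ⟨c, hc⟩ := hb
    exact ⟨c, by rintro r ⟨n, rfl⟩; exact hc (Set.mem_range_self (n + k))⟩
  refine le_antisymm (le_ciInf fun m => ?_) (le_ciInf fun m => ciInf_le hb _)
  calc (⨅ n, f (n + k)) ≤ f (m + k) := ciInf_le hb' m
    _ ≤ f m := hA (Nat.le_add_right m k)

lemma myInf_sub {f : ℕ → ℝ} (hb : BddBelow (Set.range f)) (c : ℝ) :
    ⨅ n, (f n - c) = (⨅ n, f n) - c := by
  have hb' : BddBelow (Set.range fun n => f n - c) := by
    obtain ⟨d, hd⟩ := hb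
    refine ⟨d - c, ?_⟩
    rintro r ⟨n, rfl⟩
    have := hd (Set.mem_range_self n)
    simpa using sub_le_sub_right this c
  refine le_antisymm ?_ ?_
  · have h1 : ∀ m, (⨅ n, (f n - c)) + c ≤ f m := fun m => by
      have := ciInf_le hb' m; linarith
    have := le_ciInf h1
    linarith
  · refine le_ciInf fun m => ?_
    have := ciInf_le hb m; linarith

variable {Γ : Type*} [Group Γ] [MulAction Γ X]

/-- Busemann-type function along the forward orbit of `w` under `γ`. -/
noncomputable def bus (γ : Γ) (ℓ : ℝ) (w x : X) : ℝ :=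
  ⨅ n : ℕ, (dist x (γ ^ n • w) - n * ℓ)

variable {γ : Γ} {ℓ : ℝ}

lemma bus_bdd (hdist : ∀ (g : Γ) (a b : X), dist (g • a) (g • b) = dist a b)
    (hl : 0 ≤ ℓ) (hlb : ∀ u : X, ℓ ≤ dist (γ • u) u)
    {w : X} (hw : dist (γ • w) w = ℓ) (x : X) :
    BddBelow (Set.range fun n : ℕ => dist x (γ ^ n • w) - n * ℓ) := by
  refine ⟨-dist x w, ?_⟩
  rintro r ⟨n, rfl⟩
  have hA := factA hdist hl hlb hw n
  have htri := dist_triangle (γ ^ n • w) x w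
  have hcm : dist (γ ^ n • w) x = dist x (γ ^ n • w) := dist_comm _ _
  simp only []
  linarith

lemma bus_anti (hdist : ∀ (g : Γ) (a b : X), dist (g • a) (g • b) = dist a b)
    {w : X} (hw : dist (γ • w) w = ℓ) (x : X) (n : ℕ) :
    dist x (γ ^ (n + 1) • w) - ((n : ℝ) + 1) * ℓ ≤ dist x (γ ^ n • w) - n * ℓ := by
  have h1 : γ ^ (n + 1) • w = γ ^ n • (γ • w) := by rw [pow_succ, mul_smul]
  have h2 : dist (γ ^ n • w) (γ ^ (n + 1) • w) = ℓ := by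
    rw [h1, hdist, dist_comm, hw]
  have htri := dist_triangle x (γ ^ n • w) (γ ^ (n + 1) • w)
  linarith

lemma bus_le (hdist : ∀ (g : Γ) (a b : X), dist (g • a) (g • b) = dist a b)
    (hl : 0 ≤ ℓ) (hlb : ∀ u : X, ℓ ≤ dist (γ • u) u)
    {w : X} (hw : dist (γ • w) w = ℓ) (x : X) (n : ℕ) :
    bus γ ℓ w x ≤ dist x (γ ^ n • w) - n * ℓ :=
  ciInf_le (bus_bdd hdist hl hlb hw x) n

lemma bus_self (hdist : ∀ (g : Γ) (a b : X), dist (g • a) (g • b) = dist a b)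
    (hl : 0 ≤ ℓ) (hlb : ∀ u : X, ℓ ≤ dist (γ • u) u)
    {w : X} (hw : dist (γ • w) w = ℓ) :
    bus γ ℓ w w = 0 := by
  have h : (fun n : ℕ => dist w (γ ^ n • w) - n * ℓ) = fun _ : ℕ => (0 : ℝ) := by
    funext n
    rw [dist_comm, factA hdist hl hlb hw n]
    ring
  rw [bus, h, ciInf_const]

lemma bus_lip (hdist : ∀ (g : Γ) (a b : X), dist (g • a) (g • b) = dist a b)
    (hl : 0 ≤ ℓ) (hlb : ∀ u : X, ℓ ≤ dist (γ • u) u)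
    {w : X} (hw : dist (γ • w) w = ℓ) (x z : X) :
    bus γ ℓ w x ≤ dist x z + bus γ ℓ w z := by
  have h : ∀ n : ℕ, bus γ ℓ w x - dist x z ≤ dist z (γ ^ n • w) - n * ℓ := fun n => by
    have h1 := bus_le hdist hl hlb hw x n
    have h2 := dist_triangle x z (γ ^ n • w)
    linarith
  have h3 : bus γ ℓ w x - dist x z ≤ bus γ ℓ w z := le_ciInf h
  linarith

lemma bus_smul (hdist : ∀ (g : Γ) (a b : X), dist (g • a) (g • b) = dist a b)
    (hl : 0 ≤ ℓ) (hlb : ∀ u : X, ℓ ≤ dist (γ • u) u)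
    {w' : X} (hw' : dist (γ • w') w' = ℓ) (z : X) (k : ℕ) :
    bus γ ℓ w' (γ ^ k • z) = bus γ ℓ w' z - k * ℓ := by
  have hb := bus_bdd hdist hl hlb hw' (γ ^ k • z)
  have ha : ∀ n : ℕ, dist (γ ^ k • z) (γ ^ (n + 1) • w') - ((n : ℝ) + 1) * ℓ ≤
      dist (γ ^ k • z) (γ ^ n • w') - n * ℓ := bus_anti hdist hw' (γ ^ k • z)
  have ha' : ∀ n : ℕ, (fun n : ℕ => dist (γ ^ k • z) (γ ^ n • w') - n * ℓ) (n + 1) ≤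
      (fun n : ℕ => dist (γ ^ k • z) (γ ^ n • w') - n * ℓ) n := by
    intro n; simpa using ha n
  have hshift := myInf_shift hb ha' k
  have hterm : ∀ n : ℕ, dist (γ ^ k • z) (γ ^ (n + k) • w') - ((n + k : ℕ) : ℝ) * ℓ
      = (dist z (γ ^ n • w') - n * ℓ) - k * ℓ := by
    intro n
    have h1 : γ ^ (n + k) • w' = γ ^ k • (γ ^ n • w') := by
      rw [add_comm, pow_add, mul_smul]
    rw [h1, hdist]
    push_cast
    ring
  calc bus γ ℓ w' (γ ^ k • z)
      = ⨅ n : ℕ, (dist (γ ^ k • z) (γ ^ (n + k) • w') - ((n + k : ℕ) : ℝ) * ℓ) := hshift.symm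
    _ = ⨅ n : ℕ, ((dist z (γ ^ n • w') - n * ℓ) - k * ℓ) := by
        exact congrArg _ (funext fun n => hterm n)
    _ = bus γ ℓ w' z - k * ℓ := myInf_sub (bus_bdd hdist hl hlb hw' z) _

lemma bus_key_le (hdist : ∀ (g : Γ) (a b : X), dist (g • a) (g • b) = dist a b)
    (hl : 0 ≤ ℓ) (hlb : ∀ u : X, ℓ ≤ dist (γ • u) u)
    {w w' : X} (hw : dist (γ • w) w = ℓ) (hw' : dist (γ • w') w' = ℓ) (x : X) :
    bus γ ℓ w' x ≤ bus γ ℓ w x + bus γ ℓ w' w := by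
  have h : ∀ n : ℕ, bus γ ℓ w' x - bus γ ℓ w' w ≤ dist x (γ ^ n • w) - n * ℓ := fun n => by
    have h1 := bus_lip hdist hl hlb hw' x (γ ^ n • w)
    have h2 := bus_smul hdist hl hlb hw' w n
    linarith
  have h3 : bus γ ℓ w' x - bus γ ℓ w' w ≤ bus γ ℓ w x := le_ciInf h
  linarith

set_option maxHeartbeats 1000000 in
lemma bus_strip (hdist : ∀ (g : Γ) (a b : X), dist (g • a) (g • b) = dist a b)
    (hlpos : 0 < ℓ) (hlb : ∀ u : X, ℓ ≤ dist (γ • u) u)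
    {w w' : X} (hw : dist (γ • w) w = ℓ) (hw' : dist (γ • w') w' = ℓ) :
    bus γ ℓ w w' + bus γ ℓ w' w ≤ 0 := by
  have hl : 0 ≤ ℓ := le_of_lt hlpos
  by_contra hcon
  push_neg at hcon
  set β := bus γ ℓ w w' with hβ
  set β' := bus γ ℓ w' w with hβ'
  set D := dist w w' with hD
  have hDnn : 0 ≤ D := dist_nonneg
  have hβlow : -D ≤ β := by
    refine le_ciInf fun n => ?_
    have hA := factA hdist hl hlb hw n
    have htri := dist_triangle (γ ^ n • w) w' w
    have hc1 : dist (γ ^ n • w) w' = dist w' (γ ^ n • w) := dist_comm _ _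
    have hc2 : dist w' w = D := dist_comm w' w ▸ rfl
    have hnl : 0 ≤ (n : ℝ) * ℓ := by positivity
    rw [dist_comm w' w] at htri
    linarith
  have hβ'low : -D ≤ β' := by
    refine le_ciInf fun n => ?_
    have hA := factA hdist hl hlb hw' n
    have htri := dist_triangle (γ ^ n • w') w w'
    have hc1 : dist (γ ^ n • w') w = dist w (γ ^ n • w') := dist_comm _ _
    have hnl : 0 ≤ (n : ℝ) * ℓ := by positivity
    linarith
  clear_value β β' D
  -- choose n large
  obtain ⟨n, hn⟩ := exists_nat_gt (max (D / (2 * ℓ)) (D ^ 2 / (2 * ℓ * (β + β'))))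
  have h2l : (0 : ℝ) < 2 * ℓ := by linarith
  have hn1 : D / (2 * ℓ) < n := lt_of_le_of_lt (le_max_left _ _) hn
  have hn2 : D ^ 2 / (2 * ℓ * (β + β')) < n := lt_of_le_of_lt (le_max_right _ _) hn
  have hDn : D < (n : ℝ) * (2 * ℓ) := (div_lt_iff₀ h2l).mp hn1
  have h2lb : (0 : ℝ) < 2 * ℓ * (β + β') := mul_pos h2l hcon
  have hD2n : D ^ 2 < (n : ℝ) * (2 * ℓ * (β + β')) := (div_lt_iff₀ h2lb).mp hn2
  -- the four points
  have ha : 2 * (n : ℝ) * ℓ + β ≤ dist w' (γ ^ (2 * n) • w) := by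
    have := bus_le hdist hl hlb hw w' (2 * n)
    rw [← hβ] at this
    push_cast at this
    linarith
  have hb : 2 * (n : ℝ) * ℓ + β' ≤ dist w (γ ^ (2 * n) • w') := by
    have := bus_le hdist hl hlb hw' w (2 * n)
    rw [← hβ'] at this
    push_cast at this
    linarith
  obtain ⟨u, hu, hcnu⟩ := CAT0Space.cn (γ ^ (2 * n) • w) w'
  have hc1 := hcnu (γ ^ (2 * n) • w')
  have hc2 := hcnu w
  have hd1 : dist (γ ^ (2 * n) • w') (γ ^ (2 * n) • w) = D := by
    rw [hdist, dist_comm]; exact hD.symm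
  have hd2 : dist (γ ^ (2 * n) • w') w' = 2 * (n : ℝ) * ℓ := by
    have := factA hdist hl hlb hw' (2 * n)
    rw [this]; push_cast; ring
  have hd3 : dist w (γ ^ (2 * n) • w) = 2 * (n : ℝ) * ℓ := by
    rw [dist_comm]
    have := factA hdist hl hlb hw (2 * n)
    rw [this]; push_cast; ring
  have hd4 : dist (γ ^ (2 * n) • w) w' = dist w' (γ ^ (2 * n) • w) := dist_comm _ _
  rw [hd1, hd2, hd4] at hc1
  rw [hd3, hd4, ← hD] at hc2
  -- triangle
  have htr : dist w (γ ^ (2 * n) • w') ≤ dist w u + dist (γ ^ (2 * n) • w') u := by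
    have := dist_triangle w u (γ ^ (2 * n) • w')
    have hcm : dist u (γ ^ (2 * n) • w') = dist (γ ^ (2 * n) • w') u := dist_comm _ _
    linarith
  set a := dist w' (γ ^ (2 * n) • w) with hA
  set b := dist w (γ ^ (2 * n) • w') with hB
  set s := dist w u with hS
  set t := dist (γ ^ (2 * n) • w') u with hT
  have hsnn : 0 ≤ s := hS ▸ dist_nonneg
  have htnn : 0 ≤ t := hT ▸ dist_nonneg
  have hbnn : 0 ≤ b := hB ▸ dist_nonneg
  clear_value a b s t
  clear hcnu hu hn hn1 hn2 hd1 hd2 hd3 hd4 hβ hβ' hD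
  have hanlb : 0 ≤ 2 * (n : ℝ) * ℓ + β := by linarith
  have hbnlb : 0 ≤ 2 * (n : ℝ) * ℓ + β' := by linarith
  have hsq : b ^ 2 ≤ 2 * s ^ 2 + 2 * t ^ 2 := by
    nlinarith [sq_nonneg (s - t), htr, hbnn, hsnn, htnn]
  have hab : a ^ 2 + b ^ 2 ≤ 8 * (n : ℝ) ^ 2 * ℓ ^ 2 + 2 * D ^ 2 := by linarith
  have ha2 : (2 * (n : ℝ) * ℓ + β) ^ 2 ≤ a ^ 2 := pow_le_pow_left₀ hanlb ha 2
  have hb2 : (2 * (n : ℝ) * ℓ + β') ^ 2 ≤ b ^ 2 := pow_le_pow_left₀ hbnlb hb 2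
  have hexp : 4 * (n : ℝ) * ℓ * β + 4 * (n : ℝ) * ℓ * β' + β ^ 2 + β' ^ 2 ≤ 2 * D ^ 2 := by
    nlinarith [ha2, hb2, hab]
  nlinarith [hexp, hD2n, sq_nonneg β, sq_nonneg β']

lemma bus_key (hdist : ∀ (g : Γ) (a b : X), dist (g • a) (g • b) = dist a b)
    (hlpos : 0 < ℓ) (hlb : ∀ u : X, ℓ ≤ dist (γ • u) u)
    {w w' : X} (hw : dist (γ • w) w = ℓ) (hw' : dist (γ • w') w' = ℓ) (x : X) :
    bus γ ℓ w' x = bus γ ℓ w x + bus γ ℓ w' w := by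
  have hl : 0 ≤ ℓ := le_of_lt hlpos
  refine le_antisymm (bus_key_le hdist hl hlb hw hw' x) ?_
  have h1 := bus_key_le hdist hl hlb hw' hw x
  have h2 := bus_strip hdist hlpos hlb hw hw'
  linarith

end Bus

/-- If `γ ∈ Γ` acts on a complete CAT(0) space as a hyperbolic isometry (its translation
length is attained at some `x₀` and is positive), then the image of `γ` in the
abelianization of its centralizer `Z_Γ(γ)` has infinite order. -/
theorem hyperbolic_infiniteOrder_in_abelianized_centralizer {X : Type*} [MetricSpace X]
    [CompleteSpace X] [CAT0Space X] {Γ : Type*} [Group Γ] [MulAction Γ X]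
    (hiso : ∀ g : Γ, Isometry fun x : X => g • x)
    (γ : Γ) (x₀ : X)
    (hmin : dist (γ • x₀) x₀ = sInf (Set.range fun y : X => dist (γ • y) y))
    (hpos : 0 < dist (γ • x₀) x₀) :
    ¬ IsOfFinOrder (Abelianization.of
      (⟨γ, by simp [Subgroup.mem_centralizer_iff]⟩ :
        Subgroup.centralizer ({γ} : Set Γ))) := by
  intro hfin
  set ℓ := dist (γ • x₀) x₀ with hℓ
  have hdist : ∀ (g : Γ) (a b : X), dist (g • a) (g • b) = dist a b := fun g a b =>
    (hiso g).dist_eq a b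
  have hl : 0 ≤ ℓ := dist_nonneg
  have hlpos : 0 < ℓ := hpos
  have hlb : ∀ u : X, ℓ ≤ dist (γ • u) u := by
    intro u
    rw [hmin]
    exact csInf_le ⟨0, by rintro r ⟨y, rfl⟩; exact dist_nonneg⟩ ⟨u, rfl⟩
  have hwx : dist (γ • x₀) x₀ = ℓ := rfl
  set Z := Subgroup.centralizer ({γ} : Set Γ) with hZ
  have hmem : ∀ g : Z, Commute γ (g : Γ) := fun g =>
    Subgroup.mem_centralizer_iff.mp g.2 γ (Set.mem_singleton γ)
  have hsm : ∀ (g : Z) (n : ℕ) (x : X), (g : Γ)⁻¹ • γ ^ n • x = γ ^ n • ((g : Γ)⁻¹ • x) := by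
    intro g n x
    rw [← mul_smul, ← mul_smul]
    congr 1
    exact (((hmem g).pow_left n).inv_right).eq.symm
  have hMin : ∀ g : Z, dist (γ • ((g : Γ)⁻¹ • x₀)) ((g : Γ)⁻¹ • x₀) = ℓ := by
    intro g
    have h1 : γ • ((g : Γ)⁻¹ • x₀) = (g : Γ)⁻¹ • (γ • x₀) := by
      have := hsm g 1 x₀
      simpa [pow_one] using this.symm
    rw [h1, hdist]
  -- the homomorphism
  have hφmul : ∀ g h : Z, bus γ ℓ x₀ (((g * h : Z) : Γ) • x₀) =
      bus γ ℓ x₀ ((g : Γ) • x₀) + bus γ ℓ x₀ ((h : Γ) • x₀) := by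
    intro g h
    have hw' := hMin g
    have e1 : bus γ ℓ x₀ (((g * h : Z) : Γ) • x₀) =
        bus γ ℓ ((g : Γ)⁻¹ • x₀) ((h : Γ) • x₀) := by
      unfold bus
      refine congrArg _ (funext fun n => ?_)
      have h0 : ((g * h : Z) : Γ) • x₀ = (g : Γ) • ((h : Γ) • x₀) := by
        rw [Subgroup.coe_mul, mul_smul]
      have h2 : dist ((g : Γ) • ((h : Γ) • x₀)) (γ ^ n • x₀) =
          dist ((h : Γ) • x₀) ((g : Γ)⁻¹ • (γ ^ n • x₀)) := by
        rw [← hdist ((g : Γ)⁻¹), inv_smul_smul]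
      rw [h0, h2, hsm g n x₀]
    have e2 : bus γ ℓ ((g : Γ)⁻¹ • x₀) x₀ = bus γ ℓ x₀ ((g : Γ) • x₀) := by
      unfold bus
      refine congrArg _ (funext fun n => ?_)
      rw [← hsm g n x₀, ← hdist (g : Γ) x₀ ((g : Γ)⁻¹ • γ ^ n • x₀), smul_inv_smul]
    rw [e1, bus_key hdist hlpos hlb hwx hw' ((h : Γ) • x₀), e2]
    ring
  have hφone : bus γ ℓ x₀ (((1 : Z) : Γ) • x₀) = 0 := by
    rw [OneMemClass.coe_one, one_smul]
    exact bus_self hdist hl hlb hwx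
  -- value on γ
  have keyγ : bus γ ℓ x₀ (γ • x₀) = -ℓ := by
    refine le_antisymm ?_ (le_ciInf fun n => ?_)
    · have h1 := bus_le hdist hl hlb hwx (γ • x₀) 1
      rw [pow_one, dist_self] at h1
      push_cast at h1
      linarith
    · cases n with
      | zero =>
        simp only [pow_zero, one_smul, Nat.cast_zero, zero_mul, sub_zero]
        linarith [hwx.ge]
      | succ k =>
        have h1 : γ ^ (k + 1) • x₀ = γ • (γ ^ k • x₀) := by rw [pow_succ', mul_smul]
        have h2 : dist (γ • x₀) (γ ^ (k + 1) • x₀) = (k : ℝ) * ℓ := by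
          rw [h1, hdist, dist_comm]
          exact factA hdist hl hlb hwx k
        rw [h2]
        push_cast
        linarith
  -- build the monoid hom
  let F : Z →* Multiplicative ℝ :=
    { toFun := fun g => Multiplicative.ofAdd (bus γ ℓ x₀ ((g : Γ) • x₀)),
      map_one' := by
        show Multiplicative.ofAdd (bus γ ℓ x₀ (((1 : Z) : Γ) • x₀)) = 1
        rw [hφone]; rfl,
      map_mul' := by
        intro g h
        show Multiplicative.ofAdd (bus γ ℓ x₀ (((g * h : Z) : Γ) • x₀)) = _
        rw [hφmul g h, ofAdd_add] }
  have hγZ : γ ∈ Z := by rw [hZ]; simp [Subgroup.mem_centralizer_iff]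
  have h2 : IsOfFinOrder ((Abelianization.lift F)
      (Abelianization.of (⟨γ, hγZ⟩ : Z))) :=
    (Abelianization.lift F).isOfFinOrder hfin
  rw [Abelianization.lift_apply_of] at h2
  have hFγ : F (⟨γ, hγZ⟩ : Z) =
      Multiplicative.ofAdd (-ℓ) := by
    show Multiplicative.ofAdd (bus γ ℓ x₀ (γ • x₀)) = _
    rw [keyγ]
  rw [hFγ] at h2
  obtain ⟨n, hn0, hn1⟩ := isOfFinOrder_iff_pow_eq_one.mp h2
  have h3 : (n : ℝ) * (-ℓ) = 0 := by
    have := congrArg Multiplicative.toAdd hn1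
    simpa [toAdd_pow, nsmul_eq_mul] using this
  have hn' : (0 : ℝ) < n := by exact_mod_cast hn0
  nlinarith [h3, hlpos, hn']
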